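/- On the edge p1 = 0 of the belief space the optimal policy has a threshold structure: there exists ρ ∈ [0,1] such that for every p2 ∈ [0,ρ) the point (0,p2) lies in Φ_{B_r} (i.e. V(0,p2) = V_{B_r}(0,p2)), and for every p2 ∈ [ρ,1] the point (0,p2) lies in Φ_{B_2} (i.e. V(0,p2) = V_{B_2}(0,p2)). -/

import Mathlib

open Set Filter Topology

noncomputable section

/-- Belief update for an unobserved channel: `T p = λ0 + (λ1 - λ0) p`. -/
def Tr (l0 l1 p : ℝ) : ℝ := l0 + (l1 - l0) * p

/-- The four power allocation actions. -/
inductive PAct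
  | Bb  -- balanced
  | B1  -- bet on channel 1
  | B2  -- bet on channel 2
  | Br  -- conservative

/-- Action-value functional `W_a` computed from a function `W`. -/
def Q (l0 l1 β Rl Rh Cl Ch : ℝ) (W : ℝ → ℝ → ℝ) : PAct → ℝ → ℝ → ℝ
  | PAct.Bb => fun p1 p2 =>
      (p1 + p2) * (Rl + Cl) - 2 * Cl +
        β * ((1 - p1) * (1 - p2) * W l0 l0 + p1 * p2 * W l1 l1 +
             p1 * (1 - p2) * W l1 l0 + (1 - p1) * p2 * W l0 l1)
  | PAct.B1 => fun p1 p2 =>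
      (Rh + Ch) * p1 - Ch +
        β * (p1 * W l1 (Tr l0 l1 p2) + (1 - p1) * W l0 (Tr l0 l1 p2))
  | PAct.B2 => fun p1 p2 =>
      (Rh + Ch) * p2 - Ch +
        β * (p2 * W (Tr l0 l1 p1) l1 + (1 - p2) * W (Tr l0 l1 p1) l0)
  | PAct.Br => fun p1 p2 => β * W (Tr l0 l1 p1) (Tr l0 l1 p2)

/-- The Bellman operator `L W = max over the four actions of W_a`. -/
def Bop (l0 l1 β Rl Rh Cl Ch : ℝ) (W : ℝ → ℝ → ℝ) (p1 p2 : ℝ) : ℝ :=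
  max (max (Q l0 l1 β Rl Rh Cl Ch W PAct.Bb p1 p2)
           (Q l0 l1 β Rl Rh Cl Ch W PAct.B1 p1 p2))
      (max (Q l0 l1 β Rl Rh Cl Ch W PAct.B2 p1 p2)
           (Q l0 l1 β Rl Rh Cl Ch W PAct.Br p1 p2))

/-- Boundedness on the belief space `[0,1] × [0,1]`. -/
def BddOnSq (W : ℝ → ℝ → ℝ) : Prop :=
  ∃ M : ℝ, ∀ p1 ∈ Icc (0:ℝ) 1, ∀ p2 ∈ Icc (0:ℝ) 1, |W p1 p2| ≤ M

/-- Being a fixed point of the Bellman operator on the belief space. -/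
def IsFix (l0 l1 β Rl Rh Cl Ch : ℝ) (V : ℝ → ℝ → ℝ) : Prop :=
  ∀ p1 ∈ Icc (0:ℝ) 1, ∀ p2 ∈ Icc (0:ℝ) 1,
    V p1 p2 = Bop l0 l1 β Rl Rh Cl Ch V p1 p2

/-- Decision region of action `a`: beliefs where action `a` achieves the value. -/
def Phi (l0 l1 β Rl Rh Cl Ch : ℝ) (V : ℝ → ℝ → ℝ) (a : PAct) : Set (ℝ × ℝ) :=
  {p : ℝ × ℝ | p.1 ∈ Icc (0:ℝ) 1 ∧ p.2 ∈ Icc (0:ℝ) 1 ∧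
    V p.1 p.2 = Q l0 l1 β Rl Rh Cl Ch V a p.1 p.2}

lemma Tr_mem {l0 l1 : ℝ} (hl0 : l0 ∈ Icc (0:ℝ) 1) (hl1 : l1 ∈ Icc (0:ℝ) 1)
    (hl01 : l0 < l1) {p : ℝ} (hp : p ∈ Icc (0:ℝ) 1) : Tr l0 l1 p ∈ Icc (0:ℝ) 1 := by
  obtain ⟨hp0, hp1⟩ := hp
  constructor
  · have h := mul_nonneg (sub_nonneg.mpr hl01.le) hp0
    simp only [Tr]; linarith [hl0.1]
  · have h : (l1 - l0) * p ≤ (l1 - l0) * 1 :=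
      mul_le_mul_of_nonneg_left hp1 (sub_nonneg.mpr hl01.le)
    simp only [Tr]; nlinarith [hl1.2]

lemma Tr_comb {l0 l1 x y a b : ℝ} (hab : a + b = 1) :
    Tr l0 l1 (a * x + b * y) = a * Tr l0 l1 x + b * Tr l0 l1 y := by
  simp only [Tr]; linear_combination (-l0) * hab

lemma Q_diff_le {l0 l1 β Rl Rh Cl Ch : ℝ}
    (hl0 : l0 ∈ Icc (0:ℝ) 1) (hl1 : l1 ∈ Icc (0:ℝ) 1) (hl01 : l0 < l1)
    (hβ0 : 0 ≤ β) {W1 W2 : ℝ → ℝ → ℝ} {K : ℝ}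
    (h : ∀ x ∈ Icc (0:ℝ) 1, ∀ y ∈ Icc (0:ℝ) 1, |W1 x y - W2 x y| ≤ K)
    (a : PAct) {p1 p2 : ℝ} (hp1 : p1 ∈ Icc (0:ℝ) 1) (hp2 : p2 ∈ Icc (0:ℝ) 1) :
    |Q l0 l1 β Rl Rh Cl Ch W1 a p1 p2 - Q l0 l1 β Rl Rh Cl Ch W2 a p1 p2| ≤ β * K := by
  obtain ⟨hp10, hp11⟩ := hp1
  obtain ⟨hp20, hp21⟩ := hp2
  have hT1 := Tr_mem hl0 hl1 hl01 ⟨hp10, hp11⟩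
  have hT2 := Tr_mem hl0 hl1 hl01 ⟨hp20, hp21⟩
  cases a
  case Bb =>
    have e : Q l0 l1 β Rl Rh Cl Ch W1 PAct.Bb p1 p2 - Q l0 l1 β Rl Rh Cl Ch W2 PAct.Bb p1 p2
        = β * ((1 - p1) * (1 - p2) * (W1 l0 l0 - W2 l0 l0) + p1 * p2 * (W1 l1 l1 - W2 l1 l1) +
            p1 * (1 - p2) * (W1 l1 l0 - W2 l1 l0) + (1 - p1) * p2 * (W1 l0 l1 - W2 l0 l1)) := by
      simp only [Q]; ring
    rw [e, abs_mul, abs_of_nonneg hβ0]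
    refine mul_le_mul_of_nonneg_left ?_ hβ0
    have d00 := abs_le.mp (h l0 hl0 l0 hl0)
    have d11 := abs_le.mp (h l1 hl1 l1 hl1)
    have d10 := abs_le.mp (h l1 hl1 l0 hl0)
    have d01 := abs_le.mp (h l0 hl0 l1 hl1)
    rw [abs_le]
    constructor <;>
      nlinarith [mul_nonneg (by linarith : (0:ℝ) ≤ 1 - p1) (by linarith : (0:ℝ) ≤ 1 - p2),
        mul_nonneg hp10 hp20, mul_nonneg hp10 (by linarith : (0:ℝ) ≤ 1 - p2),
        mul_nonneg (by linarith : (0:ℝ) ≤ 1 - p1) hp20]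
  case B1 =>
    have e : Q l0 l1 β Rl Rh Cl Ch W1 PAct.B1 p1 p2 - Q l0 l1 β Rl Rh Cl Ch W2 PAct.B1 p1 p2
        = β * (p1 * (W1 l1 (Tr l0 l1 p2) - W2 l1 (Tr l0 l1 p2)) +
            (1 - p1) * (W1 l0 (Tr l0 l1 p2) - W2 l0 (Tr l0 l1 p2))) := by
      simp only [Q]; ring
    rw [e, abs_mul, abs_of_nonneg hβ0]
    refine mul_le_mul_of_nonneg_left ?_ hβ0
    have d1 := abs_le.mp (h l1 hl1 _ hT2)
    have d0 := abs_le.mp (h l0 hl0 _ hT2)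
    rw [abs_le]
    constructor <;> nlinarith
  case B2 =>
    have e : Q l0 l1 β Rl Rh Cl Ch W1 PAct.B2 p1 p2 - Q l0 l1 β Rl Rh Cl Ch W2 PAct.B2 p1 p2
        = β * (p2 * (W1 (Tr l0 l1 p1) l1 - W2 (Tr l0 l1 p1) l1) +
            (1 - p2) * (W1 (Tr l0 l1 p1) l0 - W2 (Tr l0 l1 p1) l0)) := by
      simp only [Q]; ring
    rw [e, abs_mul, abs_of_nonneg hβ0]
    refine mul_le_mul_of_nonneg_left ?_ hβ0
    have d1 := abs_le.mp (h _ hT1 l1 hl1)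
    have d0 := abs_le.mp (h _ hT1 l0 hl0)
    rw [abs_le]
    constructor <;> nlinarith
  case Br =>
    have e : Q l0 l1 β Rl Rh Cl Ch W1 PAct.Br p1 p2 - Q l0 l1 β Rl Rh Cl Ch W2 PAct.Br p1 p2
        = β * (W1 (Tr l0 l1 p1) (Tr l0 l1 p2) - W2 (Tr l0 l1 p1) (Tr l0 l1 p2)) := by
      simp only [Q]; ring
    rw [e, abs_mul, abs_of_nonneg hβ0]
    exact mul_le_mul_of_nonneg_left (h _ hT1 _ hT2) hβ0

lemma Bop_diff_le {l0 l1 β Rl Rh Cl Ch : ℝ}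
    (hl0 : l0 ∈ Icc (0:ℝ) 1) (hl1 : l1 ∈ Icc (0:ℝ) 1) (hl01 : l0 < l1)
    (hβ0 : 0 ≤ β) {W1 W2 : ℝ → ℝ → ℝ} {K : ℝ}
    (h : ∀ x ∈ Icc (0:ℝ) 1, ∀ y ∈ Icc (0:ℝ) 1, |W1 x y - W2 x y| ≤ K)
    {p1 p2 : ℝ} (hp1 : p1 ∈ Icc (0:ℝ) 1) (hp2 : p2 ∈ Icc (0:ℝ) 1) :
    |Bop l0 l1 β Rl Rh Cl Ch W1 p1 p2 - Bop l0 l1 β Rl Rh Cl Ch W2 p1 p2| ≤ β * K := by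
  unfold Bop
  refine (abs_max_sub_max_le_max _ _ _ _).trans (max_le ?_ ?_) <;>
  refine (abs_max_sub_max_le_max _ _ _ _).trans (max_le ?_ ?_) <;>
  exact Q_diff_le hl0 hl1 hl01 hβ0 h _ hp1 hp2

def Vit (l0 l1 β Rl Rh Cl Ch : ℝ) : ℕ → ℝ → ℝ → ℝ
  | 0 => fun _ _ => 0
  | n + 1 => Bop l0 l1 β Rl Rh Cl Ch (Vit l0 l1 β Rl Rh Cl Ch n)

lemma Vit_close {l0 l1 β Rl Rh Cl Ch : ℝ}
    (hl0 : l0 ∈ Icc (0:ℝ) 1) (hl1 : l1 ∈ Icc (0:ℝ) 1) (hl01 : l0 < l1)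
    (hβ0 : 0 ≤ β) {V : ℝ → ℝ → ℝ} {M : ℝ}
    (hM : ∀ x ∈ Icc (0:ℝ) 1, ∀ y ∈ Icc (0:ℝ) 1, |V x y| ≤ M)
    (hVfix : ∀ p1 ∈ Icc (0:ℝ) 1, ∀ p2 ∈ Icc (0:ℝ) 1,
      V p1 p2 = Bop l0 l1 β Rl Rh Cl Ch V p1 p2) :
    ∀ n, ∀ p1 ∈ Icc (0:ℝ) 1, ∀ p2 ∈ Icc (0:ℝ) 1,
      |Vit l0 l1 β Rl Rh Cl Ch n p1 p2 - V p1 p2| ≤ β ^ n * M := by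
  intro n
  induction n with
  | zero =>
    intro p1 hp1 p2 hp2
    simpa [Vit, abs_sub_comm] using hM p1 hp1 p2 hp2
  | succ n ih =>
    intro p1 hp1 p2 hp2
    have : Vit l0 l1 β Rl Rh Cl Ch (n+1) p1 p2 - V p1 p2
        = Bop l0 l1 β Rl Rh Cl Ch (Vit l0 l1 β Rl Rh Cl Ch n) p1 p2
          - Bop l0 l1 β Rl Rh Cl Ch V p1 p2 := by
      rw [← hVfix p1 hp1 p2 hp2]; rfl
    rw [this]
    calc |_| ≤ β * (β ^ n * M) := Bop_diff_le hl0 hl1 hl01 hβ0 ih hp1 hp2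
      _ = β ^ (n+1) * M := by ring

lemma Vit_tendsto {l0 l1 β Rl Rh Cl Ch : ℝ}
    (hl0 : l0 ∈ Icc (0:ℝ) 1) (hl1 : l1 ∈ Icc (0:ℝ) 1) (hl01 : l0 < l1)
    (hβ0 : 0 ≤ β) (hβ1 : β < 1) {V : ℝ → ℝ → ℝ} {M : ℝ}
    (hM : ∀ x ∈ Icc (0:ℝ) 1, ∀ y ∈ Icc (0:ℝ) 1, |V x y| ≤ M)
    (hVfix : ∀ p1 ∈ Icc (0:ℝ) 1, ∀ p2 ∈ Icc (0:ℝ) 1,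
      V p1 p2 = Bop l0 l1 β Rl Rh Cl Ch V p1 p2)
    {p1 p2 : ℝ} (hp1 : p1 ∈ Icc (0:ℝ) 1) (hp2 : p2 ∈ Icc (0:ℝ) 1) :
    Tendsto (fun n => Vit l0 l1 β Rl Rh Cl Ch n p1 p2) atTop (𝓝 (V p1 p2)) := by
  rw [tendsto_iff_dist_tendsto_zero]
  have hgeo : Tendsto (fun n : ℕ => β ^ n * M) atTop (𝓝 0) := by
    simpa using (tendsto_pow_atTop_nhds_zero_of_lt_one hβ0 hβ1).mul_const M
  refine squeeze_zero (fun n => dist_nonneg) (fun n => ?_) hgeo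
  rw [Real.dist_eq]
  exact Vit_close hl0 hl1 hl01 hβ0 hM hVfix n p1 hp1 p2 hp2

lemma convexOn_max {f g : ℝ → ℝ} (hf : ConvexOn ℝ (Icc (0:ℝ) 1) f)
    (hg : ConvexOn ℝ (Icc (0:ℝ) 1) g) :
    ConvexOn ℝ (Icc (0:ℝ) 1) (fun x => max (f x) (g x)) := by
  refine ⟨convex_Icc 0 1, fun x hx y hy a b ha hb hab => ?_⟩
  simp only [smul_eq_mul]
  have h1 : f (a • x + b • y) ≤ a * f x + b * f y := by
    simpa [smul_eq_mul] using hf.2 hx hy ha hb hab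
  have h2 : g (a • x + b • y) ≤ a * g x + b * g y := by
    simpa [smul_eq_mul] using hg.2 hx hy ha hb hab
  refine max_le (h1.trans ?_) (h2.trans ?_)
  · exact add_le_add (mul_le_mul_of_nonneg_left (le_max_left _ _) ha)
      (mul_le_mul_of_nonneg_left (le_max_left _ _) hb)
  · exact add_le_add (mul_le_mul_of_nonneg_left (le_max_right _ _) ha)
      (mul_le_mul_of_nonneg_left (le_max_right _ _) hb)

lemma Q_convexOn {l0 l1 β Rl Rh Cl Ch : ℝ}
    (hl0 : l0 ∈ Icc (0:ℝ) 1) (hl1 : l1 ∈ Icc (0:ℝ) 1) (hl01 : l0 < l1)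
    (hβ0 : 0 ≤ β) {W : ℝ → ℝ → ℝ}
    (hW : ∀ q1 ∈ Icc (0:ℝ) 1, ConvexOn ℝ (Icc (0:ℝ) 1) (W q1))
    (a : PAct) {p1 : ℝ} (hp1 : p1 ∈ Icc (0:ℝ) 1) :
    ConvexOn ℝ (Icc (0:ℝ) 1) (fun p2 => Q l0 l1 β Rl Rh Cl Ch W a p1 p2) := by
  obtain ⟨hp10, hp11⟩ := hp1
  cases a
  case Bb =>
    refine ⟨convex_Icc 0 1, fun x hx y hy a b ha hb hab => ?_⟩
    have hb' : b = 1 - a := by linarith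
    subst hb'
    refine le_of_eq ?_
    simp only [Q, smul_eq_mul]; ring
  case B2 =>
    refine ⟨convex_Icc 0 1, fun x hx y hy a b ha hb hab => ?_⟩
    have hb' : b = 1 - a := by linarith
    subst hb'
    refine le_of_eq ?_
    simp only [Q, smul_eq_mul]; ring
  case B1 =>
    refine ⟨convex_Icc 0 1, fun x hx y hy a b ha hb hab => ?_⟩
    have hTx := Tr_mem hl0 hl1 hl01 hx
    have hTy := Tr_mem hl0 hl1 hl01 hy
    have hc1 : W l1 (Tr l0 l1 (a * x + b * y)) ≤
        a * W l1 (Tr l0 l1 x) + b * W l1 (Tr l0 l1 y) := by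
      rw [Tr_comb hab]
      simpa [smul_eq_mul] using (hW l1 hl1).2 hTx hTy ha hb hab
    have hc0 : W l0 (Tr l0 l1 (a * x + b * y)) ≤
        a * W l0 (Tr l0 l1 x) + b * W l0 (Tr l0 l1 y) := by
      rw [Tr_comb hab]
      simpa [smul_eq_mul] using (hW l0 hl0).2 hTx hTy ha hb hab
    simp only [Q, smul_eq_mul]
    have hb' : b = 1 - a := by linarith
    subst hb'
    nlinarith [mul_le_mul_of_nonneg_left hc1 (mul_nonneg hβ0 hp10),
      mul_le_mul_of_nonneg_left hc0 (mul_nonneg hβ0 (by linarith : (0:ℝ) ≤ 1 - p1))]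
  case Br =>
    refine ⟨convex_Icc 0 1, fun x hx y hy a b ha hb hab => ?_⟩
    have hTx := Tr_mem hl0 hl1 hl01 hx
    have hTy := Tr_mem hl0 hl1 hl01 hy
    have hTp1 := Tr_mem hl0 hl1 hl01 ⟨hp10, hp11⟩
    have hc : W (Tr l0 l1 p1) (Tr l0 l1 (a * x + b * y)) ≤
        a * W (Tr l0 l1 p1) (Tr l0 l1 x) + b * W (Tr l0 l1 p1) (Tr l0 l1 y) := by
      rw [Tr_comb hab]
      simpa [smul_eq_mul] using (hW _ hTp1).2 hTx hTy ha hb hab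
    simp only [Q, smul_eq_mul]
    nlinarith [mul_le_mul_of_nonneg_left hc hβ0]

lemma Bop_convexOn {l0 l1 β Rl Rh Cl Ch : ℝ}
    (hl0 : l0 ∈ Icc (0:ℝ) 1) (hl1 : l1 ∈ Icc (0:ℝ) 1) (hl01 : l0 < l1)
    (hβ0 : 0 ≤ β) {W : ℝ → ℝ → ℝ}
    (hW : ∀ q1 ∈ Icc (0:ℝ) 1, ConvexOn ℝ (Icc (0:ℝ) 1) (W q1))
    {p1 : ℝ} (hp1 : p1 ∈ Icc (0:ℝ) 1) :
    ConvexOn ℝ (Icc (0:ℝ) 1) (fun p2 => Bop l0 l1 β Rl Rh Cl Ch W p1 p2) := by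
  unfold Bop
  exact convexOn_max
    (convexOn_max (Q_convexOn hl0 hl1 hl01 hβ0 hW _ hp1) (Q_convexOn hl0 hl1 hl01 hβ0 hW _ hp1))
    (convexOn_max (Q_convexOn hl0 hl1 hl01 hβ0 hW _ hp1) (Q_convexOn hl0 hl1 hl01 hβ0 hW _ hp1))

lemma Vit_convexOn {l0 l1 β Rl Rh Cl Ch : ℝ}
    (hl0 : l0 ∈ Icc (0:ℝ) 1) (hl1 : l1 ∈ Icc (0:ℝ) 1) (hl01 : l0 < l1)
    (hβ0 : 0 ≤ β) :
    ∀ n, ∀ p1 ∈ Icc (0:ℝ) 1, ConvexOn ℝ (Icc (0:ℝ) 1) (Vit l0 l1 β Rl Rh Cl Ch n p1) := by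
  intro n
  induction n with
  | zero => exact fun p1 _ => convexOn_const 0 (convex_Icc 0 1)
  | succ n ih => exact fun p1 hp1 => Bop_convexOn hl0 hl1 hl01 hβ0 ih hp1

lemma convexOn_of_tendsto {F : ℕ → ℝ → ℝ} {g : ℝ → ℝ}
    (hF : ∀ n, ConvexOn ℝ (Icc (0:ℝ) 1) (F n))
    (h : ∀ x ∈ Icc (0:ℝ) 1, Tendsto (fun n => F n x) atTop (𝓝 (g x))) :
    ConvexOn ℝ (Icc (0:ℝ) 1) g := by
  refine ⟨convex_Icc 0 1, fun x hx y hy a b ha hb hab => ?_⟩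
  have hxy : a • x + b • y ∈ Icc (0:ℝ) 1 := (convex_Icc (0:ℝ) 1) hx hy ha hb hab
  refine le_of_tendsto_of_tendsto' (h _ hxy)
    (((h x hx).const_mul a).add ((h y hy).const_mul b)) (fun n => ?_)
  simpa [smul_eq_mul] using (hF n).2 hx hy ha hb hab

lemma Bop_cont {l0 l1 β Rl Rh Cl Ch : ℝ} {W : ℝ → ℝ → ℝ}
    (hW : Continuous fun p : ℝ × ℝ => W p.1 p.2) :
    Continuous fun p : ℝ × ℝ => Bop l0 l1 β Rl Rh Cl Ch W p.1 p.2 := by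
  have hc : ∀ {g h : ℝ × ℝ → ℝ}, Continuous g → Continuous h →
      Continuous fun p => W (g p) (h p) := fun hg hh => hW.comp (hg.prodMk hh)
  have h1 : Continuous fun p : ℝ × ℝ => W l1 (Tr l0 l1 p.2) :=
    hc continuous_const (by unfold Tr; fun_prop)
  have h0 : Continuous fun p : ℝ × ℝ => W l0 (Tr l0 l1 p.2) :=
    hc continuous_const (by unfold Tr; fun_prop)
  have h1' : Continuous fun p : ℝ × ℝ => W (Tr l0 l1 p.1) l1 :=
    hc (by unfold Tr; fun_prop) continuous_const
  have h0' : Continuous fun p : ℝ × ℝ => W (Tr l0 l1 p.1) l0 :=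
    hc (by unfold Tr; fun_prop) continuous_const
  have hr : Continuous fun p : ℝ × ℝ => W (Tr l0 l1 p.1) (Tr l0 l1 p.2) :=
    hc (by unfold Tr; fun_prop) (by unfold Tr; fun_prop)
  simp only [Bop, Q]
  refine Continuous.max (Continuous.max ?_ ?_) (Continuous.max ?_ ?_)
  · fun_prop
  · exact ((continuous_const.mul continuous_fst).sub continuous_const).add
      (continuous_const.mul ((continuous_fst.mul h1).add
        ((continuous_const.sub continuous_fst).mul h0)))
  · exact ((continuous_const.mul continuous_snd).sub continuous_const).add
      (continuous_const.mul ((continuous_snd.mul h1').add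
        ((continuous_const.sub continuous_snd).mul h0')))
  · exact continuous_const.mul hr

lemma Vit_cont {l0 l1 β Rl Rh Cl Ch : ℝ} (n : ℕ) :
    Continuous fun p : ℝ × ℝ => Vit l0 l1 β Rl Rh Cl Ch n p.1 p.2 := by
  induction n with
  | zero => simpa [Vit] using continuous_const
  | succ n ih => exact Bop_cont ih

/-- On the edge `p1 = 0` the optimal policy has a threshold structure. -/
theorem edge_threshold
    (l0 l1 β Rl Rh Cl Ch : ℝ)
    (hl0 : l0 ∈ Icc (0:ℝ) 1) (hl1 : l1 ∈ Icc (0:ℝ) 1) (hl01 : l0 < l1)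
    (hβ0 : 0 ≤ β) (hβ1 : β < 1)
    (hRl : 0 < Rl) (hRh : 0 < Rh) (hCl : 0 < Cl) (hCh : 0 < Ch)
    (hRlh : Rl < Rh) (hRh2 : Rh < 2 * Rl)
    (hClh : Cl < Ch) (hCh2 : Ch < 2 * Cl)
    (hRhCh : Ch < Rh) (hRlCl : Cl < Rl)
    (V : ℝ → ℝ → ℝ) (hVbdd : BddOnSq V)
    (hVfix : IsFix l0 l1 β Rl Rh Cl Ch V) :
    ∃ ρ ∈ Icc (0:ℝ) 1,
      (∀ p2 ∈ Ico (0:ℝ) ρ, ((0:ℝ), p2) ∈ Phi l0 l1 β Rl Rh Cl Ch V PAct.Br) ∧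
      (∀ p2 ∈ Icc ρ (1:ℝ), ((0:ℝ), p2) ∈ Phi l0 l1 β Rl Rh Cl Ch V PAct.B2) := by
  obtain ⟨M0, hM0⟩ := hVbdd
  set M := max M0 0 with hMdef
  have hM : ∀ x ∈ Icc (0:ℝ) 1, ∀ y ∈ Icc (0:ℝ) 1, |V x y| ≤ M :=
    fun x hx y hy => (hM0 x hx y hy).trans (le_max_left _ _)
  have h01 : (0:ℝ) ∈ Icc (0:ℝ) 1 := ⟨le_refl 0, zero_le_one⟩
  have h11 : (1:ℝ) ∈ Icc (0:ℝ) 1 := ⟨zero_le_one, le_refl 1⟩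
  have hVfix' := hVfix
  have hTr0 : Tr l0 l1 0 = l0 := by unfold Tr; ring
  have hTr1 : Tr l0 l1 1 = l1 := by unfold Tr; ring
  -- convexity of V l0 on [0,1]
  have hVconv : ConvexOn ℝ (Icc (0:ℝ) 1) (V l0) :=
    convexOn_of_tendsto (F := fun n => Vit l0 l1 β Rl Rh Cl Ch n l0)
      (fun n => Vit_convexOn hl0 hl1 hl01 hβ0 n l0 hl0)
      (fun x hx => Vit_tendsto hl0 hl1 hl01 hβ0 hβ1 hM hVfix' hl0 hx)
  -- continuity of V l0 on [0,1]
  have hVcont : ContinuousOn (V l0) (Icc (0:ℝ) 1) := by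
    have hunif : TendstoUniformlyOn (fun n q => Vit l0 l1 β Rl Rh Cl Ch n l0 q)
        (V l0) atTop (Icc (0:ℝ) 1) := by
      rw [Metric.tendstoUniformlyOn_iff]
      intro ε hε
      have hgeo : Tendsto (fun n : ℕ => β ^ n * M) atTop (𝓝 0) := by
        simpa using (tendsto_pow_atTop_nhds_zero_of_lt_one hβ0 hβ1).mul_const M
      filter_upwards [hgeo.eventually_lt_const hε] with n hn q hq
      rw [Real.dist_eq, abs_sub_comm]
      exact lt_of_le_of_lt (Vit_close hl0 hl1 hl01 hβ0 hM hVfix' n l0 hl0 q hq) hn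
    exact hunif.continuousOn (Filter.Frequently.of_forall fun n =>
      ((Vit_cont n).comp (continuous_const.prodMk continuous_id)).continuousOn)
  set f : ℝ → ℝ := fun p => (Rh + Ch) * p - Ch +
      β * (p * V l0 l1 + (1 - p) * V l0 l0) - β * V l0 (Tr l0 l1 p) with hfdef
  have hfQ : ∀ p : ℝ, f p = Q l0 l1 β Rl Rh Cl Ch V PAct.B2 0 p
      - Q l0 l1 β Rl Rh Cl Ch V PAct.Br 0 p := by
    intro p
    simp only [hfdef, Q, hTr0]
    all_goals ring
  have hf1 : f 1 = Rh := by simp only [hfdef]; rw [hTr1]; ring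
  have hf0 : f 0 = -Ch := by simp only [hfdef]; rw [hTr0]; ring
  have hTc : Continuous (Tr l0 l1) := by unfold Tr; fun_prop
  have hfcont : ContinuousOn f (Icc (0:ℝ) 1) := by
    have h2 : ContinuousOn (fun p => V l0 (Tr l0 l1 p)) (Icc (0:ℝ) 1) :=
      hVcont.comp hTc.continuousOn (fun q hq => Tr_mem hl0 hl1 hl01 hq)
    have h1 : Continuous fun p : ℝ =>
        (Rh + Ch) * p - Ch + β * (p * V l0 l1 + (1 - p) * V l0 l0) := by fun_prop
    exact h1.continuousOn.sub (continuousOn_const.mul h2)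
  have hfconc : ∀ x ∈ Icc (0:ℝ) 1, ∀ y ∈ Icc (0:ℝ) 1, ∀ a b : ℝ,
      0 ≤ a → 0 ≤ b → a + b = 1 → a * f x + b * f y ≤ f (a * x + b * y) := by
    intro x hx y hy a b ha hb hab
    have hTx := Tr_mem hl0 hl1 hl01 hx
    have hTy := Tr_mem hl0 hl1 hl01 hy
    have hc : V l0 (Tr l0 l1 (a * x + b * y)) ≤
        a * V l0 (Tr l0 l1 x) + b * V l0 (Tr l0 l1 y) := by
      rw [Tr_comb hab]
      simpa [smul_eq_mul] using hVconv.2 hTx hTy ha hb hab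
    have hb' : b = 1 - a := by linarith
    subst hb'
    simp only [hfdef]
    nlinarith [mul_le_mul_of_nonneg_left hc hβ0]
  -- dominance of B2 over Bb and Br over B1 on the edge p1 = 0
  have hdomB : ∀ p2 ∈ Icc (0:ℝ) 1, Q l0 l1 β Rl Rh Cl Ch V PAct.Bb 0 p2 ≤
      Q l0 l1 β Rl Rh Cl Ch V PAct.B2 0 p2 := by
    intro p2 hp2
    simp only [Q, hTr0]
    nlinarith [mul_nonneg hp2.1 (sub_nonneg.mpr hRlh.le),
      mul_nonneg hp2.1 (sub_nonneg.mpr hClh.le)]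
  have hdom1 : ∀ p2 : ℝ, Q l0 l1 β Rl Rh Cl Ch V PAct.B1 0 p2 ≤
      Q l0 l1 β Rl Rh Cl Ch V PAct.Br 0 p2 := by
    intro p2
    simp only [Q, hTr0]
    nlinarith
  set S : Set ℝ := Icc (0:ℝ) 1 ∩ f ⁻¹' (Ici 0) with hSdef
  have hS1 : (1:ℝ) ∈ S := ⟨h11, by simp only [mem_preimage, mem_Ici, hf1]; exact hRh.le⟩
  have hSclosed : IsClosed S := hfcont.preimage_isClosed_of_isClosed isClosed_Icc isClosed_Ici
  have hSbdd : BddBelow S := ⟨0, fun x hx => hx.1.1⟩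
  have hSne : S.Nonempty := ⟨1, hS1⟩
  set ρ := sInf S with hρdef
  have hρS : ρ ∈ S := hSclosed.csInf_mem hSne hSbdd
  have hρIcc : ρ ∈ Icc (0:ℝ) 1 := hρS.1
  have hfρ : 0 ≤ f ρ := hρS.2
  refine ⟨ρ, hρIcc, ?_, ?_⟩
  · -- region [0, ρ): conservative action
    intro p2 hp2
    have hp2I : p2 ∈ Icc (0:ℝ) 1 := ⟨hp2.1, hp2.2.le.trans hρIcc.2⟩
    have hfneg : f p2 < 0 := by
      by_contra h
      have : p2 ∈ S := ⟨hp2I, not_lt.mp h⟩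
      exact absurd (csInf_le hSbdd this) (not_le.mpr hp2.2)
    have hrb : Q l0 l1 β Rl Rh Cl Ch V PAct.B2 0 p2 ≤
        Q l0 l1 β Rl Rh Cl Ch V PAct.Br 0 p2 := by
      have := hfQ p2; linarith
    simp only [Phi, Set.mem_setOf_eq]
    refine ⟨h01, hp2I, ?_⟩
    rw [hVfix 0 h01 p2 hp2I]
    unfold Bop
    rw [max_eq_right hrb, max_eq_right (max_le ((hdomB p2 hp2I).trans hrb) (hdom1 p2))]
  · -- region [ρ, 1]: bet on channel 2
    intro p2 hp2
    have hp2I : p2 ∈ Icc (0:ℝ) 1 := ⟨hρIcc.1.trans hp2.1, hp2.2⟩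
    have hfpos : 0 ≤ f p2 := by
      rcases eq_or_lt_of_le hp2.1 with heq | hlt
      · rw [← heq]; exact hfρ
      · have hρ1 : ρ < 1 := lt_of_lt_of_le hlt hp2.2
        have hden : (0:ℝ) < 1 - ρ := by linarith
        set a : ℝ := (1 - p2) / (1 - ρ) with hadef
        set b : ℝ := (p2 - ρ) / (1 - ρ) with hbdef
        have ha : 0 ≤ a := div_nonneg (by linarith [hp2.2]) hden.le
        have hb : 0 ≤ b := div_nonneg (by linarith) hden.le
        have hab : a + b = 1 := by
          rw [hadef, hbdef]; field_simp; ring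
        have hcomb : a * ρ + b * 1 = p2 := by
          rw [hadef, hbdef]; field_simp; ring
        have hkey := hfconc ρ hρIcc 1 h11 a b ha hb hab
        rw [hcomb] at hkey
        have : 0 ≤ a * f ρ + b * f 1 :=
          add_nonneg (mul_nonneg ha hfρ) (mul_nonneg hb (by rw [hf1]; exact hRh.le))
        linarith
    have hrb : Q l0 l1 β Rl Rh Cl Ch V PAct.Br 0 p2 ≤
        Q l0 l1 β Rl Rh Cl Ch V PAct.B2 0 p2 := by
      have := hfQ p2; linarith
    simp only [Phi, Set.mem_setOf_eq]
    refine ⟨h01, hp2I, ?_⟩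
    rw [hVfix 0 h01 p2 hp2I]
    unfold Bop
    rw [max_eq_left hrb, max_eq_right (max_le (hdomB p2 hp2I) ((hdom1 p2).trans hrb))]
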